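/- Let K be a field, I an ideal of K[x,y], f ∈ K[x,y], and η, η' positive integers with η' > η and deg_y f < η'. Suppose g = y^η − ĝ with g ∈ I and deg_y ĝ ≤ 2η − η'. Write f = f_1·y^η + f_0 with deg_y f_0 < η. Then f' := f_1·ĝ + f_0 satisfies: (1) f' ∈ f + I; (2) deg_y f' < η; (3) deg_x f' ≤ deg_x f + deg_x g. -/

import Mathlib

open MvPolynomial

private lemma degOf_neg {K : Type*} [Field K] (i : Fin 2) (p : MvPolynomial (Fin 2) K) :
    degreeOf i (-p) = degreeOf i p := by
  simp [degreeOf_eq_sup, support_neg]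

private lemma supp_mul_monomial {K : Type*} [Field K] (p : MvPolynomial (Fin 2) K)
    (s : Fin 2 →₀ ℕ) :
    (p * monomial s (1 : K)).support = p.support.map (addRightEmbedding s) :=
  AddMonoidAlgebra.support_coeff_mul_single p _ (by simp) _

theorem stmt_5 {K : Type*} [Field K] (I : Ideal (MvPolynomial (Fin 2) K))
    (f g gg f₁ f₀ : MvPolynomial (Fin 2) K) (η η' : ℕ)
    (hη : 0 < η) (hηη' : η < η')
    (hf : degreeOf 1 f < η')
    (hg : g = X 1 ^ η - gg) (hgI : g ∈ I)
    (hgg : (degreeOf 1 gg : ℤ) ≤ 2 * (η : ℤ) - (η' : ℤ))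
    (hsplit : f = f₁ * X 1 ^ η + f₀) (hf₀ : degreeOf 1 f₀ < η) :
    (f₁ * gg + f₀) - f ∈ I ∧
      degreeOf 1 (f₁ * gg + f₀) < η ∧
      degreeOf 0 (f₁ * gg + f₀) ≤ degreeOf 0 f + degreeOf 0 g := by
  have hη'2η : η' ≤ 2 * η := by
    have h0 : (0 : ℤ) ≤ (degreeOf 1 gg : ℤ) := Int.natCast_nonneg _
    omega
  have hggN : degreeOf 1 gg ≤ 2 * η - η' := by omega
  set s : Fin 2 →₀ ℕ := Finsupp.single 1 η with hs
  -- monomials of f₁ shifted by s lie in the support of f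
  have hmem1 : ∀ m ∈ f₁.support, m + s ∈ f.support := by
    intro m hm
    have hcoef : coeff (m + s) f = coeff m f₁ := by
      rw [hsplit, coeff_add, X_pow_eq_monomial, ← hs, coeff_mul_monomial, mul_one]
      have hf₀0 : coeff (m + s) f₀ = 0 := by
        by_contra h
        have := monomial_le_degreeOf (f := f₀) 1 (mem_support_iff.2 h)
        have hms : (m + s) 1 = m 1 + η := by simp [hs]
        omega
      rw [hf₀0, add_zero]
    rw [mem_support_iff, hcoef]
    exact mem_support_iff.1 hm
  -- monomials of f₀ lie in the support of f
  have hmem0 : ∀ m ∈ f₀.support, m ∈ f.support := by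
    intro m hm
    have hcoef : coeff m f = coeff m f₀ := by
      rw [hsplit, coeff_add, X_pow_eq_monomial, ← hs]
      have h0 : coeff m (f₁ * monomial s (1 : K)) = 0 := by
        by_contra h
        have hm' : m ∈ (f₁ * monomial s (1 : K)).support := mem_support_iff.2 h
        rw [supp_mul_monomial] at hm'
        obtain ⟨m', _, rfl⟩ := Finset.mem_map.1 hm'
        have hd := monomial_le_degreeOf (f := f₀) 1 hm
        have : (addRightEmbedding s m') 1 = m' 1 + η := by
          simp [addRightEmbedding, hs]
        omega
      rw [h0, zero_add]
    rw [mem_support_iff, hcoef]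
    exact mem_support_iff.1 hm
  have hdeg1f₁ : degreeOf 1 f₁ ≤ η' - η - 1 := by
    rw [degreeOf_le_iff]
    intro m hm
    have := monomial_le_degreeOf (f := f) 1 (hmem1 m hm)
    have hms : (m + s) 1 = m 1 + η := by simp [hs]
    omega
  have hdeg0f₁ : degreeOf 0 f₁ ≤ degreeOf 0 f := by
    rw [degreeOf_le_iff]
    intro m hm
    have := monomial_le_degreeOf (f := f) 0 (hmem1 m hm)
    have hms : (m + s) 0 = m 0 := by simp [hs]
    omega
  have hdeg0f₀ : degreeOf 0 f₀ ≤ degreeOf 0 f := by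
    rw [degreeOf_le_iff]
    intro m hm
    exact monomial_le_degreeOf 0 (hmem0 m hm)
  have hdeg0gg : degreeOf 0 gg ≤ degreeOf 0 g := by
    have hgg' : gg = X 1 ^ η + (-g) := by rw [hg]; ring
    have hX : degreeOf 0 ((X 1 : MvPolynomial (Fin 2) K) ^ η) = 0 := by
      rw [X_pow_eq_monomial, degreeOf_monomial_eq _ _ (one_ne_zero)]
      simp
    have h1 : degreeOf 0 gg ≤ max (degreeOf 0 ((X 1 : MvPolynomial (Fin 2) K) ^ η))
        (degreeOf 0 (-g)) := by rw [hgg']; exact degreeOf_add_le _ _ _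
    rw [hX, degOf_neg] at h1
    simpa using h1
  refine ⟨?_, ?_, ?_⟩
  · have heq : (f₁ * gg + f₀) - f = -(f₁ * g) := by rw [hsplit, hg]; ring
    rw [heq]
    exact neg_mem (I.mul_mem_left f₁ hgI)
  · have h1 : degreeOf 1 (f₁ * gg) ≤ degreeOf 1 f₁ + degreeOf 1 gg := degreeOf_mul_le _ _ _
    have h2 := degreeOf_add_le 1 (f₁ * gg) f₀
    omega
  · have h1 : degreeOf 0 (f₁ * gg) ≤ degreeOf 0 f₁ + degreeOf 0 gg := degreeOf_mul_le _ _ _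
    have h2 := degreeOf_add_le 0 (f₁ * gg) f₀
    omega
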